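/- Let c(α) := ∫₀¹ erf(√(α/(8t))) dt for α > 0. Then lim_{α → ∞} (1 − c(α)) · α^{3/2} · e^{α/8} = 16 √(2/π); that is, 1 − c(α) ∼ 16 √(2/π) · e^{−α/8} / α^{3/2} as α → ∞. -/

import Mathlib

open MeasureTheory Filter

/-- The error function `erf x = (2/√π) ∫_0^x e^{-s²} ds`. -/
noncomputable def erf (x : ℝ) : ℝ :=
  (2 / Real.sqrt Real.pi) * ∫ s in (0:ℝ)..x, Real.exp (-s ^ 2)

/-- `c(α) = ∫_0^1 erf(√(α/(8t))) dt`. -/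
noncomputable def cFun (α : ℝ) : ℝ :=
  ∫ t in (0:ℝ)..1, erf (Real.sqrt (α / (8 * t)))

open Set Real Topology

noncomputable def J (n : ℕ) (x : ℝ) : ℝ := ∫ s in Ioi x, Real.exp (-s^2) / s^n

lemma gauss_integrable : Integrable (fun s : ℝ => Real.exp (-s^2)) := by
  simpa using integrable_exp_neg_mul_sq (one_pos)

lemma J_integrableOn (n : ℕ) {x : ℝ} (hx : 0 < x) :
    IntegrableOn (fun s => Real.exp (-s^2) / s^n) (Ioi x) := by
  refine Integrable.mono' ((gauss_integrable.restrict (s := Ioi x)).div_const (x^n)) ?_ ?_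
  · exact ((Real.continuous_exp.comp (continuous_pow 2).neg).measurable.div
      (measurable_id.pow_const n)).aestronglyMeasurable
  · filter_upwards [ae_restrict_mem measurableSet_Ioi] with s hs
    have hs0 : 0 < s := hx.trans hs
    rw [Real.norm_eq_abs, abs_of_nonneg (by positivity)]
    exact div_le_div_of_nonneg_left (Real.exp_pos _).le (by positivity)
      (pow_le_pow_left₀ hx.le (le_of_lt hs) n)

lemma J_nonneg (n : ℕ) {x : ℝ} (hx : 0 < x) : 0 ≤ J n x := by
  refine setIntegral_nonneg measurableSet_Ioi fun s hs => ?_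
  have : 0 < s := hx.trans hs
  positivity

lemma J_ibp (k : ℕ) {x : ℝ} (hx : 0 < x) :
    J k x + ((k+1 : ℝ)/2) * J (k+2) x = Real.exp (-x^2) / (2 * x^(k+1)) := by
  have key : ∫ s in Ioi x, (Real.exp (-s^2) / s^k + ((k+1:ℝ)/2) * (Real.exp (-s^2) / s^(k+2)))
      = 0 - (-(Real.exp (-x^2) / (2 * x^(k+1)))) := by
    refine integral_Ioi_of_hasDerivAt_of_tendsto' (f := fun s => -(Real.exp (-s^2) / (2 * s^(k+1))))
      (fun s hs => ?_) ?_ ?_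
    · have hs0 : 0 < s := lt_of_lt_of_le hx hs
      have h1 : HasDerivAt (fun s : ℝ => Real.exp (-s^2)) (Real.exp (-s^2) * -(2*s)) s := by
        have := (Real.hasDerivAt_exp (-s^2)).comp s (((hasDerivAt_pow 2 s)).neg)
        simpa [mul_comm, Function.comp_def, Pi.neg_def] using this
      have h2 : HasDerivAt (fun s : ℝ => 2 * s^(k+1)) (2 * ((k+1 : ℕ) * s^k)) s :=
        (hasDerivAt_pow (k+1) s).const_mul 2
      have h3 := (h1.div h2 (by positivity)).neg
      convert h3 using 1
      · rfl
      field_simp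
      push_cast
      ring
    · exact ((J_integrableOn k hx).add ((J_integrableOn (k+2) hx).const_mul _))
    · have h0 : Tendsto (fun s : ℝ => Real.exp (-s^2)) atTop (𝓝 0) :=
        Real.tendsto_exp_atBot.comp (tendsto_neg_atTop_atBot.comp (tendsto_pow_atTop two_ne_zero))
      have hb : Tendsto (fun s : ℝ => (2 * s^(k+1))⁻¹) atTop (𝓝 0) := by
        apply Tendsto.inv_tendsto_atTop
        exact (tendsto_pow_atTop (Nat.succ_ne_zero k)).const_mul_atTop two_pos
      have := (h0.mul hb).neg
      simpa [div_eq_mul_inv] using this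
  have hi1 := J_integrableOn k hx
  have hi2 := (J_integrableOn (k+2) hx).const_mul ((k+1:ℝ)/2)
  rw [integral_add hi1 hi2, integral_const_mul] at key
  simpa [J] using key

lemma J0_eq {x : ℝ} (hx : 0 < x) :
    J 0 x = Real.exp (-x^2) * (1/(2*x) - 1/(4*x^3) + 3/(8*x^5)) - (15/8) * J 6 x := by
  have h0 := J_ibp 0 hx
  have h2 := J_ibp 2 hx
  have h4 := J_ibp 4 hx
  norm_num at h0 h2 h4
  linear_combination h0 - (1/2)*h2 + (3/4)*h4

lemma J0_le {x : ℝ} (hx : 0 < x) : J 0 x ≤ Real.exp (-x^2) / (2*x) := by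
  have h0 := J_ibp 0 hx
  have h2 := J_nonneg 2 hx
  norm_num at h0
  nlinarith

lemma J6_le {x : ℝ} (hx : 0 < x) : J 6 x ≤ Real.exp (-x^2) / (2*x^7) := by
  have h1 : J 6 x ≤ J 0 x / x^6 := by
    have : J 6 x ≤ ∫ s in Ioi x, Real.exp (-s^2) / x^6 := by
      refine setIntegral_mono_on (J_integrableOn 6 hx)
        ((gauss_integrable.restrict).div_const _) measurableSet_Ioi fun s hs => ?_
      have hs0 : 0 < s := hx.trans hs
      exact div_le_div_of_nonneg_left (Real.exp_pos _).le (by positivity)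
        (pow_le_pow_left₀ hx.le (le_of_lt hs) 6)
    simpa [J, div_eq_mul_inv, integral_mul_const] using this
  refine h1.trans ?_
  have h2 := J0_le hx
  calc J 0 x / x^6 ≤ (Real.exp (-x^2) / (2*x)) / x^6 := by
        gcongr
    _ = Real.exp (-x^2) / (2*x^7) := by field_simp

lemma gauss_Ioi : ∫ s in Ioi (0:ℝ), Real.exp (-s^2) = Real.sqrt π / 2 := by
  simpa using integral_gaussian_Ioi 1

lemma sqrt_pi_pos : 0 < Real.sqrt π := Real.sqrt_pos.mpr Real.pi_pos

lemma erf_hasDerivAt (x : ℝ) : HasDerivAt erf (2 / Real.sqrt π * Real.exp (-x^2)) x := by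
  have h := intervalIntegral.integral_hasDerivAt_right
    (gauss_integrable.intervalIntegrable (a := 0) (b := x))
    (gauss_integrable.1.stronglyMeasurableAtFilter)
    ((Real.continuous_exp.comp (continuous_pow 2).neg).continuousAt)
  exact h.const_mul _

lemma continuous_erf : Continuous erf :=
  continuous_iff_continuousAt.mpr fun x => (erf_hasDerivAt x).continuousAt

lemma one_sub_erf {x : ℝ} (hx : 0 ≤ x) : 1 - erf x = (2 / Real.sqrt π) * J 0 x := by
  have hsplit : (∫ s in Ioc 0 x, Real.exp (-s^2)) + ∫ s in Ioi x, Real.exp (-s^2)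
      = ∫ s in Ioi (0:ℝ), Real.exp (-s^2) := by
    rw [← setIntegral_union (Ioc_disjoint_Ioi le_rfl) measurableSet_Ioi
      gauss_integrable.integrableOn gauss_integrable.integrableOn,
      Ioc_union_Ioi_eq_Ioi hx]
  rw [erf, intervalIntegral.integral_of_le hx]
  rw [gauss_Ioi] at hsplit
  have hπ := sqrt_pi_pos.ne'
  simp only [J, pow_zero, div_one]
  field_simp
  linarith [hsplit]

lemma erf_nonneg {x : ℝ} (hx : 0 ≤ x) : 0 ≤ erf x := by
  rw [erf]
  have : 0 ≤ ∫ s in (0:ℝ)..x, Real.exp (-s^2) :=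
    intervalIntegral.integral_nonneg hx (fun s _ => (Real.exp_pos _).le)
  positivity

lemma J0_nonneg (x : ℝ) : 0 ≤ J 0 x :=
  setIntegral_nonneg measurableSet_Ioi fun s _ => by positivity

lemma erf_le_one {x : ℝ} (hx : 0 ≤ x) : erf x ≤ 1 := by
  have := one_sub_erf hx
  have h0 : 0 ≤ 2 / Real.sqrt π * J 0 x := by
    have := J0_nonneg x
    positivity
  linarith

lemma erf_tendsto_one : Tendsto erf atTop (𝓝 1) := by
  have h : Tendsto (fun x : ℝ => ∫ s in (0:ℝ)..x, Real.exp (-s^2)) atTop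
      (𝓝 (Real.sqrt π / 2)) := by
    rw [← gauss_Ioi]
    exact intervalIntegral_tendsto_integral_Ioi 0 gauss_integrable.integrableOn tendsto_id
  have := h.const_mul (2 / Real.sqrt π)
  have hπ := sqrt_pi_pos.ne'
  convert this using 2
  · rfl
  field_simp

noncomputable def Faux (a t : ℝ) : ℝ :=
  t * erf (Real.sqrt (a/t)) + (2*Real.sqrt a/Real.sqrt π) * (Real.sqrt t * Real.exp (-(a/t)))
    + 2*a*erf (Real.sqrt (a/t))

lemma Faux_hasDerivAt {a t : ℝ} (ha : 0 < a) (ht : 0 < t) :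
    HasDerivAt (Faux a) (erf (Real.sqrt (a/t))) t := by
  have hat : 0 < a / t := div_pos ha ht
  -- derivative of t ↦ a/t
  have h1 : HasDerivAt (fun t : ℝ => a/t) (a * -(t^2)⁻¹) t := by
    simpa [div_eq_mul_inv] using (hasDerivAt_inv ht.ne').const_mul a
  have h2 : HasDerivAt (fun t : ℝ => Real.sqrt (a/t))
      (1/(2*Real.sqrt (a/t)) * (a * -(t^2)⁻¹)) t :=
    (Real.hasDerivAt_sqrt hat.ne').comp t h1
  have h3 : HasDerivAt (fun t : ℝ => erf (Real.sqrt (a/t)))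
      (2 / Real.sqrt π * Real.exp (-(Real.sqrt (a/t))^2) * (1/(2*Real.sqrt (a/t)) * (a * -(t^2)⁻¹))) t :=
    (erf_hasDerivAt _).comp t h2
  have h4 : HasDerivAt (fun t : ℝ => Real.exp (-(a/t)))
      (Real.exp (-(a/t)) * -(a * -(t^2)⁻¹)) t := by
    simpa [Function.comp_def, Pi.neg_def] using (Real.hasDerivAt_exp (-(a/t))).comp t h1.neg
  have h5 : HasDerivAt (fun t : ℝ => Real.sqrt t) (1/(2*Real.sqrt t)) t :=
    Real.hasDerivAt_sqrt ht.ne'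
  have hD := (((hasDerivAt_id t).mul h3).add
      (((h5.mul h4)).const_mul (2*Real.sqrt a/Real.sqrt π))).add (h3.const_mul (2*a))
  refine hD.congr_deriv ?_
  have hsq : Real.sqrt (a/t) = Real.sqrt a / Real.sqrt t := Real.sqrt_div ha.le t
  have hsqt : Real.sqrt t ^ 2 = t := Real.sq_sqrt ht.le
  have hsqa : Real.sqrt a ^ 2 = a := Real.sq_sqrt ha.le
  have hst : 0 < Real.sqrt t := Real.sqrt_pos.mpr ht
  have hsa : 0 < Real.sqrt a := Real.sqrt_pos.mpr ha
  have hE : Real.exp (-(Real.sqrt (a/t))^2) = Real.exp (-(a/t)) := by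
    rw [Real.sq_sqrt hat.le]
  rw [hE, hsq]
  have hπ := sqrt_pi_pos
  set u := Real.sqrt t with hu
  set v := Real.sqrt a with hv
  rw [show t = u^2 from hsqt.symm, show a = v^2 from hsqa.symm]
  simp only [id_eq]
  field_simp
  ring

lemma sqrt_tendsto_atTop : Tendsto Real.sqrt atTop atTop := by
  refine (tendsto_rpow_atTop (by norm_num : (0:ℝ) < 1/2)).congr' ?_
  filter_upwards [eventually_ge_atTop (0:ℝ)] with x hx
  exact (Real.sqrt_eq_rpow x).symm

lemma Faux_tendsto_zero {a : ℝ} (ha : 0 < a) :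
    Tendsto (Faux a) (𝓝[>] 0) (𝓝 (2*a)) := by
  have harg : Tendsto (fun t : ℝ => a/t) (𝓝[>] 0) atTop := by
    simpa [div_eq_mul_inv] using tendsto_inv_nhdsGT_zero.const_mul_atTop ha
  have hsq : Tendsto (fun t : ℝ => Real.sqrt (a/t)) (𝓝[>] 0) atTop :=
    sqrt_tendsto_atTop.comp harg
  have herf : Tendsto (fun t : ℝ => erf (Real.sqrt (a/t))) (𝓝[>] 0) (𝓝 1) :=
    erf_tendsto_one.comp hsq
  have ht0 : Tendsto (fun t : ℝ => t) (𝓝[>] 0) (𝓝 0) :=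
    tendsto_id.mono_left nhdsWithin_le_nhds
  have hsqrt0 : Tendsto (fun t : ℝ => Real.sqrt t) (𝓝[>] 0) (𝓝 0) := by
    have := (Real.continuous_sqrt.tendsto 0).comp ht0
    simpa [Function.comp_def] using this
  have hexp0 : Tendsto (fun t : ℝ => Real.exp (-(a/t))) (𝓝[>] 0) (𝓝 0) :=
    Real.tendsto_exp_atBot.comp (tendsto_neg_atTop_atBot.comp harg)
  have h1 : Tendsto (fun t : ℝ => t * erf (Real.sqrt (a/t))) (𝓝[>] 0) (𝓝 0) := by
    have := ht0.mul herf
    simpa using this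
  have h2 : Tendsto (fun t : ℝ =>
      (2*Real.sqrt a/Real.sqrt π) * (Real.sqrt t * Real.exp (-(a/t)))) (𝓝[>] 0) (𝓝 0) := by
    have := (hsqrt0.mul hexp0).const_mul (2*Real.sqrt a/Real.sqrt π)
    simpa using this
  have h3 : Tendsto (fun t : ℝ => 2*a*erf (Real.sqrt (a/t))) (𝓝[>] 0) (𝓝 (2*a)) := by
    have := herf.const_mul (2*a)
    simpa using this
  have := (h1.add h2).add h3
  rw [zero_add, zero_add] at this
  exact this

lemma cFun_eq {α : ℝ} (hα : 0 < α) :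
    cFun α = (1 + 2*(α/8)) * erf (Real.sqrt (α/8))
      + (2*Real.sqrt (α/8)/Real.sqrt π) * Real.exp (-(α/8)) - 2*(α/8) := by
  set a := α/8 with hadef
  have ha : 0 < a := by positivity
  set G : ℝ → ℝ := fun t => if t ≤ 0 then 2*a else Faux a t with hG
  have hGF : ∀ t : ℝ, 0 < t → G t = Faux a t := fun t ht => by
    simp [hG, not_le.mpr ht]
  have hcont : ContinuousOn G (Icc 0 1) := by
    intro t htmem
    rcases eq_or_lt_of_le htmem.1 with h0 | h0
    · -- t = 0
      subst h0
      rw [← Ioc_insert_left (by norm_num : (0:ℝ) ≤ 1)]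
      rw [ContinuousWithinAt]
      apply continuousWithinAt_insert_self.mpr ?_
      rw [ContinuousWithinAt]
      have hG0 : G 0 = 2*a := by simp [hG]
      rw [hG0]
      refine Tendsto.congr' ?_ ((Faux_tendsto_zero ha).mono_left
        (nhdsWithin_mono _ Ioc_subset_Ioi_self))
      filter_upwards [self_mem_nhdsWithin] with t ht
      exact (hGF t ht.1).symm
    · -- t > 0
      have : ContinuousAt G t := by
        have hev : G =ᶠ[𝓝 t] Faux a := by
          filter_upwards [Ioi_mem_nhds h0] with s hs using hGF s hs
        exact ((Faux_hasDerivAt ha h0).continuousAt.congr hev.symm)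
      exact this.continuousWithinAt
  have hderiv : ∀ t ∈ Ioo (0:ℝ) 1,
      HasDerivWithinAt G (erf (Real.sqrt (α / (8 * t)))) (Ioi t) t := by
    intro t ht
    have harg : α / (8 * t) = a / t := by rw [hadef]; ring
    rw [harg]
    have hev : G =ᶠ[𝓝 t] Faux a := by
      filter_upwards [Ioi_mem_nhds ht.1] with s hs using hGF s hs
    exact (((Faux_hasDerivAt ha ht.1).congr_of_eventuallyEq hev)).hasDerivWithinAt
  have hint : IntervalIntegrable (fun t => erf (Real.sqrt (α / (8 * t)))) volume 0 1 := by
    rw [intervalIntegrable_iff_integrableOn_Ioc_of_le (by norm_num)]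
    refine Integrable.mono' (g := fun _ => (1:ℝ)) (integrableOn_const measure_Ioc_lt_top.ne) ?_ ?_
    · refine ((continuous_erf.comp Real.continuous_sqrt).measurable.comp ?_).aestronglyMeasurable
      exact measurable_const.div ((measurable_const.mul measurable_id))
    · refine ae_of_all _ fun t => ?_
      have h0 : 0 ≤ Real.sqrt (α / (8*t)) := Real.sqrt_nonneg _
      rw [Real.norm_eq_abs, abs_of_nonneg (erf_nonneg h0)]
      exact erf_le_one h0
  have := intervalIntegral.integral_eq_sub_of_hasDeriv_right_of_le (by norm_num : (0:ℝ) ≤ 1)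
    hcont hderiv hint
  rw [cFun, this, hGF 1 one_pos]
  have hG0 : G 0 = 2*a := by simp [hG]
  rw [hG0, Faux]
  norm_num
  ring

lemma tendsto_R : Tendsto (fun x : ℝ => (1+2*x^2)*x^3*Real.exp (x^2) * J 6 x) atTop (𝓝 0) := by
  have h3x : Tendsto (fun x : ℝ => 3/x) atTop (𝓝 0) :=
    tendsto_const_nhds.div_atTop tendsto_id
  refine tendsto_of_tendsto_of_tendsto_of_le_of_le' tendsto_const_nhds h3x ?_ ?_
  · filter_upwards [eventually_gt_atTop (0:ℝ)] with x hx
    have := J_nonneg 6 hx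
    positivity
  · filter_upwards [eventually_ge_atTop (1:ℝ)] with x hx1
    have hx : (0:ℝ) < x := lt_of_lt_of_le one_pos hx1
    have hJ := J6_le hx
    have hEB : Real.exp (x^2) * Real.exp (-x^2) = 1 := by
      rw [← Real.exp_add]; simp
    have hC : 0 ≤ (1+2*x^2)*x^3*Real.exp (x^2) := by positivity
    have h1 : (1+2*x^2)*x^3*Real.exp (x^2) * J 6 x
        ≤ (1+2*x^2)*x^3*Real.exp (x^2) * (Real.exp (-x^2) / (2*x^7)) :=
      mul_le_mul_of_nonneg_left hJ hC
    refine h1.trans ?_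
    have h2 : (1+2*x^2)*x^3*Real.exp (x^2) * (Real.exp (-x^2) / (2*x^7))
        = (1+2*x^2)/(2*x^4) := by
      field_simp
      linear_combination hEB
    rw [h2]
    rw [div_le_div_iff₀ (by positivity) hx]
    nlinarith [mul_nonneg (sub_nonneg.mpr hx1) hx.le,
      mul_nonneg (sub_nonneg.mpr hx1) (sq_nonneg x),
      mul_nonneg (sub_nonneg.mpr hx1) (pow_nonneg hx.le 3)]

lemma tendsto_main : Tendsto (fun x : ℝ =>
    ((1+2*x^2)*(1 - erf x) - (2*x/Real.sqrt π)*Real.exp (-x^2)) * x^3 * Real.exp (x^2))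
    atTop (𝓝 (1/Real.sqrt π)) := by
  have hsmall : Tendsto (fun x : ℝ => 3/(8*x^2)) atTop (𝓝 0) :=
    tendsto_const_nhds.div_atTop ((tendsto_pow_atTop two_ne_zero).const_mul_atTop (by norm_num))
  have h1 : Tendsto (fun x : ℝ => (2/Real.sqrt π)*(2⁻¹ + 3/(8*x^2))
      - (15/(4*Real.sqrt π)) * ((1+2*x^2)*x^3*Real.exp (x^2) * J 6 x)) atTop
      (𝓝 ((2/Real.sqrt π)*(2⁻¹ + 0) - (15/(4*Real.sqrt π)) * 0)) :=
    ((tendsto_const_nhds.add hsmall).const_mul _).sub (tendsto_R.const_mul _)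
  have hval : (2/Real.sqrt π)*(2⁻¹ + 0) - (15/(4*Real.sqrt π)) * 0 = 1/Real.sqrt π := by
    field_simp
    ring
  rw [hval] at h1
  refine Tendsto.congr' ?_ h1
  filter_upwards [eventually_gt_atTop (0:ℝ)] with x hx
  rw [one_sub_erf hx.le, J0_eq hx]
  rw [Real.exp_neg]
  have hπ := sqrt_pi_pos
  field_simp
  ring

/-- `1 - c(α) ~ 16√(2/π) e^{-α/8}/α^{3/2}` as `α → ∞`, i.e.
`(1 - c(α)) α^{3/2} e^{α/8} → 16√(2/π)`. -/
theorem cFun_subleading_asymp :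
    Tendsto (fun α : ℝ => (1 - cFun α) * α ^ ((3 : ℝ) / 2) * Real.exp (α / 8))
      atTop (nhds (16 * Real.sqrt (2 / Real.pi))) := by
  have hs8 : Tendsto (fun α : ℝ => Real.sqrt (α/8)) atTop atTop :=
    sqrt_tendsto_atTop.comp (tendsto_id.atTop_div_const (by norm_num))
  have hcomp := (tendsto_main.comp hs8).const_mul (16*Real.sqrt 2)
  have hval : (16*Real.sqrt 2) * (1/Real.sqrt π) = 16 * Real.sqrt (2/π) := by
    rw [Real.sqrt_div (by norm_num : (0:ℝ) ≤ 2)]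
    ring
  rw [hval] at hcomp
  refine Tendsto.congr' ?_ hcomp
  filter_upwards [eventually_gt_atTop (0:ℝ)] with α hα
  set x := Real.sqrt (α/8) with hxdef
  have hx2 : x^2 = α/8 := Real.sq_sqrt (by positivity)
  have h2 : Real.sqrt 2 ^ 2 = 2 := Real.sq_sqrt (by norm_num)
  have h8 : Real.sqrt 8 = 2*Real.sqrt 2 := by
    rw [show (8:ℝ) = 2^2*2 by norm_num, Real.sqrt_mul (by positivity),
      Real.sqrt_sq (by norm_num : (0:ℝ) ≤ 2)]
  have hα32 : α ^ ((3:ℝ)/2) = 16*Real.sqrt 2 * x^3 := by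
    have e1 : α ^ ((3:ℝ)/2) = (α ^ ((1:ℝ)/2))^(3:ℕ) := by
      rw [← Real.rpow_natCast (α ^ ((1:ℝ)/2)) 3, ← Real.rpow_mul hα.le]
      norm_num
    have e2 : α ^ ((1:ℝ)/2) = Real.sqrt α := (Real.sqrt_eq_rpow α).symm
    have e3 : Real.sqrt α = Real.sqrt 8 * x := by
      rw [hxdef, ← Real.sqrt_mul (by norm_num : (0:ℝ) ≤ 8)]
      congr 1
      ring
    rw [e1, e2, e3, h8]
    linear_combination (8*Real.sqrt 2*x^3) * h2
  have hsub : 1 - cFun α = (1+2*x^2)*(1 - erf x) - (2*x/Real.sqrt π)*Real.exp (-x^2) := by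
    rw [cFun_eq hα, ← hxdef, hx2]
    ring
  have key : (1 - cFun α) * α ^ ((3 : ℝ) / 2) * Real.exp (α / 8)
      = 16*Real.sqrt 2 * (((1+2*x^2)*(1 - erf x) - (2*x/Real.sqrt π)*Real.exp (-x^2))
        * x^3 * Real.exp (x^2)) := by
    rw [hsub, hα32, hx2]
    ring
  exact key.symm
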